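/- arXiv:2506.02984 — 4 statements merged into one kernel-verified Lean document; each statement's English description precedes it below -/
import Mathlib

section
/- Let E ∈ Σ satisfy E e_i = e_i for some index i, and suppose the spectral radius of E is strictly greater than 1. Then the intersection over t ≥ 0 of E^t[Δ] contains at least two distinct points (namely e_i and a point v ∈ Δ with Ev = ρv, where ρ > 1 is the spectral radius), hence is not a singleton. -/
open Matrix

abbrev MatZ (n : ℕ) : Type := Matrix (Fin (n + 1)) (Fin (n + 1)) ℤ

def inSigma {n : ℕ} (A : MatZ n) : Prop :=
  IsUnit A.det ∧ ∀ i j, 0 ≤ A i j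

def IsPermMat {n : ℕ} (A : MatZ n) : Prop :=
  ∃ σ : Equiv.Perm (Fin (n + 1)), ∀ i j, A i j = if i = σ j then 1 else 0

noncomputable def toR {n : ℕ} (A : MatZ n) : Matrix (Fin (n + 1)) (Fin (n + 1)) ℝ :=
  A.map ((↑) : ℤ → ℝ)

noncomputable def projAct {n : ℕ} (A : Matrix (Fin (n + 1)) (Fin (n + 1)) ℝ)
    (x : Fin (n + 1) → ℝ) : Fin (n + 1) → ℝ :=
  (∑ i, (A *ᵥ x) i)⁻¹ • (A *ᵥ x)

noncomputable def simg {n : ℕ} (A : MatZ n) : Set (Fin (n + 1) → ℝ) :=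
  projAct (toR A) '' stdSimplex ℝ (Fin (n + 1))

def wordProd {n : ℕ} (A0 A1 : MatZ n) (w : List Bool) : MatZ n :=
  (w.map (fun b => bif b then A1 else A0)).prod

def Contractive {n : ℕ} (A0 A1 : MatZ n) : Prop :=
  ∀ a : ℕ → Bool, ∃ p,
    (⋂ t : ℕ, simg (wordProd A0 A1 ((List.range t).map a))) = {p}

def Nmat (n : ℕ) : MatZ n :=
  Matrix.of fun i j => if i = j then 1 else if j = 1 ∧ i = 0 then 1 else 0

def Fmat (n : ℕ) : MatZ n :=
  Matrix.of fun i j => if i = Equiv.swap (0 : Fin (n + 1)) 1 j then 1 else 0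

def Rmat (n : ℕ) : MatZ n :=
  Matrix.of fun i j => if i = j + 1 then 1 else 0

def Lmat (n : ℕ) : MatZ n := Fmat n * Nmat n * Fmat n

def Mon0 (n : ℕ) : MatZ n := Nmat n * Fmat n * Rmat n

def Mon1 (n : ℕ) : MatZ n := Lmat n * Rmat n

def permMat {n : ℕ} (σ : Equiv.Perm (Fin (n + 1))) : MatZ n :=
  Matrix.of fun i j => if i = σ j then 1 else 0

section AuxPF
variable {n : ℕ}

lemma pow_entry_nonneg (E : MatZ n) (hE : ∀ i j, 0 ≤ E i j) (t : ℕ) :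
    ∀ i j, 0 ≤ (E ^ t) i j := by
  induction t with
  | zero => intro i j; rw [pow_zero]; by_cases h : i = j <;> simp [Matrix.one_apply, h]
  | succ t ih =>
    intro i j
    rw [pow_succ, Matrix.mul_apply]
    exact Finset.sum_nonneg fun k _ => mul_nonneg (ih i k) (hE k j)

lemma map_cast_mul {R : Type*} [CommRing R] (A B : MatZ n) :
    (A * B).map ((↑) : ℤ → R) = A.map ((↑) : ℤ → R) * B.map ((↑) : ℤ → R) := by
  ext i j
  simp [Matrix.mul_apply, Matrix.map_apply]

lemma toR_pow (E : MatZ n) (t : ℕ) : (toR E) ^ t = toR (E ^ t) := by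
  induction t with
  | zero =>
    rw [pow_zero, pow_zero, toR]
    exact (Matrix.map_one _ (by simp) (by simp)).symm
  | succ t ih => rw [pow_succ, pow_succ, ih, toR, toR, toR, map_cast_mul]

lemma toC_pow (E : MatZ n) (t : ℕ) :
    (E.map ((↑) : ℤ → ℂ)) ^ t = (E ^ t).map ((↑) : ℤ → ℂ) := by
  induction t with
  | zero =>
    rw [pow_zero, pow_zero]
    exact (Matrix.map_one _ (by simp) (by simp)).symm
  | succ t ih => rw [pow_succ, pow_succ, ih, map_cast_mul]

noncomputable def sEnt (E : MatZ n) (t : ℕ) : ℝ := ∑ i, ∑ j, ((E ^ t) i j : ℝ)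

lemma sEnt_submul (E : MatZ n) (hE : ∀ i j, 0 ≤ E i j) (a b : ℕ) :
    sEnt E (a + b) ≤ sEnt E a * sEnt E b := by
  have hnn : ∀ t (i j : Fin (n+1)), (0:ℝ) ≤ ((E ^ t) i j : ℝ) := fun t i j => by
    exact_mod_cast pow_entry_nonneg E hE t i j
  have key : sEnt E (a + b)
      = ∑ k, (∑ i, ((E ^ a) i k : ℝ)) * (∑ j, ((E ^ b) k j : ℝ)) := by
    calc sEnt E (a + b) = ∑ i, ∑ j, ∑ k, ((E ^ a) i k : ℝ) * ((E ^ b) k j : ℝ) := by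
          unfold sEnt
          rw [pow_add]
          simp only [Matrix.mul_apply]
          push_cast
          rfl
      _ = ∑ i, ∑ k, ∑ j, ((E ^ a) i k : ℝ) * ((E ^ b) k j : ℝ) :=
          Finset.sum_congr rfl fun i _ => Finset.sum_comm
      _ = ∑ k, ∑ i, ∑ j, ((E ^ a) i k : ℝ) * ((E ^ b) k j : ℝ) := Finset.sum_comm
      _ = ∑ k, (∑ i, ((E ^ a) i k : ℝ)) * (∑ j, ((E ^ b) k j : ℝ)) := by
          refine Finset.sum_congr rfl fun k _ => ?_
          rw [Finset.sum_mul]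
          exact Finset.sum_congr rfl fun i _ => (Finset.mul_sum _ _ _).symm
  rw [key]
  have hb : ∀ k, (0:ℝ) ≤ ∑ j, ((E ^ b) k j : ℝ) := fun k =>
    Finset.sum_nonneg fun j _ => hnn b k j
  calc ∑ k, (∑ i, ((E ^ a) i k : ℝ)) * (∑ j, ((E ^ b) k j : ℝ))
      ≤ ∑ k, sEnt E a * (∑ j, ((E ^ b) k j : ℝ)) := by
        refine Finset.sum_le_sum fun k _ => mul_le_mul_of_nonneg_right ?_ (hb k)
        calc ∑ i, ((E ^ a) i k : ℝ) ≤ ∑ i, ∑ j, ((E ^ a) i j : ℝ) :=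
              Finset.sum_le_sum fun i _ =>
                Finset.single_le_sum (fun j _ => hnn a i j) (Finset.mem_univ k)
          _ = sEnt E a := rfl
    _ = sEnt E a * sEnt E b := by rw [← Finset.mul_sum]; rfl

lemma exists_eigenvector (M : Matrix (Fin (n+1)) (Fin (n+1)) ℂ) (μ : ℂ)
    (h : μ ∈ spectrum ℂ M) : ∃ x : Fin (n+1) → ℂ, x ≠ 0 ∧ M *ᵥ x = μ • x := by
  rw [spectrum.mem_iff] at h
  rw [Matrix.isUnit_iff_isUnit_det, isUnit_iff_ne_zero, not_not] at h
  obtain ⟨x, hx0, hx⟩ := (Matrix.exists_mulVec_eq_zero_iff).2 h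
  refine ⟨x, hx0, ?_⟩
  rw [Matrix.sub_mulVec, sub_eq_zero] at hx
  have h2 : (algebraMap ℂ (Matrix (Fin (n+1)) (Fin (n+1)) ℂ)) μ *ᵥ x = μ • x := by
    funext i
    simp [Matrix.algebraMap_eq_diagonal, Matrix.mulVec_diagonal]
  rw [h2] at hx
  exact hx.symm

lemma norm_pow_le_sEnt (E : MatZ n) (hE : ∀ i j, 0 ≤ E i j) (μ : ℂ)
    (hμ : μ ∈ spectrum ℂ (E.map ((↑) : ℤ → ℂ))) (t : ℕ) : ‖μ‖ ^ t ≤ sEnt E t := by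
  obtain ⟨x, hx0, hx⟩ := exists_eigenvector _ μ hμ
  have hnnR : ∀ (a : ℕ) (i j : Fin (n+1)), (0:ℝ) ≤ ((E ^ a) i j : ℝ) := fun a i j => by
    exact_mod_cast pow_entry_nonneg E hE a i j
  have hiter : (E.map ((↑) : ℤ → ℂ)) ^ t *ᵥ x = μ ^ t • x := by
    induction t with
    | zero => simp
    | succ t ih =>
      rw [pow_succ, pow_succ, ← Matrix.mulVec_mulVec, hx, Matrix.mulVec_smul, ih,
        smul_smul, mul_comm]
  obtain ⟨i0, -, hmax⟩ := Finset.exists_max_image Finset.univ (fun i => ‖x i‖)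
    ⟨0, Finset.mem_univ 0⟩
  have hxi0 : 0 < ‖x i0‖ := by
    obtain ⟨j, hj⟩ := Function.ne_iff.1 hx0
    exact lt_of_lt_of_le (norm_pos_iff.2 hj) (hmax j (Finset.mem_univ j))
  have hcomp : (((E.map ((↑) : ℤ → ℂ)) ^ t) *ᵥ x) i0 = μ ^ t * x i0 := by
    rw [hiter]; rfl
  have hnormbd : ‖μ‖ ^ t * ‖x i0‖ ≤ sEnt E t * ‖x i0‖ := by
    calc ‖μ‖ ^ t * ‖x i0‖ = ‖μ ^ t * x i0‖ := by rw [norm_mul, norm_pow]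
      _ = ‖∑ j, ((E.map ((↑) : ℤ → ℂ)) ^ t) i0 j * x j‖ := by
          rw [← hcomp]; rfl
      _ ≤ ∑ j, ‖((E.map ((↑) : ℤ → ℂ)) ^ t) i0 j * x j‖ := norm_sum_le _ _
      _ ≤ ∑ j, ((E ^ t) i0 j : ℝ) * ‖x i0‖ := by
          refine Finset.sum_le_sum fun j _ => ?_
          rw [norm_mul, toC_pow]
          have h1 : ‖((E ^ t) i0 j : ℂ)‖ = ((E ^ t) i0 j : ℝ) := by
            rw [show (((E ^ t) i0 j : ℤ) : ℂ) = (((E ^ t) i0 j : ℝ) : ℂ) by push_cast; rfl,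
              Complex.norm_real, Real.norm_eq_abs, abs_of_nonneg]
            exact hnnR t i0 j
          rw [show ((E ^ t).map ((↑) : ℤ → ℂ)) i0 j = (((E ^ t) i0 j : ℤ) : ℂ) from rfl, h1]
          exact mul_le_mul_of_nonneg_left (hmax j (Finset.mem_univ j)) (hnnR t i0 j)
      _ ≤ ∑ i, (∑ j, ((E ^ t) i j : ℝ)) * ‖x i0‖ := by
          rw [← Finset.sum_mul, ← Finset.sum_mul]
          refine mul_le_mul_of_nonneg_right ?_ hxi0.le
          exact Finset.single_le_sum
            (f := fun i => ∑ j, ((E ^ t) i j : ℝ))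
            (fun i _ => Finset.sum_nonneg fun j _ => hnnR t i j) (Finset.mem_univ i0)
      _ = sEnt E t * ‖x i0‖ := by rw [← Finset.sum_mul]; rfl
  exact le_of_mul_le_mul_right hnormbd hxi0



set_option maxHeartbeats 1000000 in
lemma perron (E : MatZ n) (hE : ∀ i j, 0 ≤ E i j) (μ : ℂ)
    (hμ : μ ∈ spectrum ℂ (E.map ((↑) : ℤ → ℂ))) (hμ1 : 1 < ‖μ‖) :
    ∃ ρ : ℝ, 1 < ρ ∧ ∃ v ∈ stdSimplex ℝ (Fin (n + 1)), toR E *ᵥ v = ρ • v := by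
  set A := toR E with hA
  have hnnR : ∀ (a : ℕ) (i j : Fin (n+1)), (0:ℝ) ≤ ((E ^ a) i j : ℝ) := fun a i j => by
    exact_mod_cast pow_entry_nonneg E hE a i j
  have hsle : ∀ t, ‖μ‖ ^ t ≤ sEnt E t := norm_pow_le_sEnt E hE μ hμ
  have hμ0 : (0:ℝ) < ‖μ‖ := by linarith
  have hs_pos : ∀ t, 0 < sEnt E t := fun t => lt_of_lt_of_le (pow_pos hμ0 t) (hsle t)
  set g : ℕ → ℝ := fun t => sEnt E (t+1) ^ (((t+1 : ℕ) : ℝ))⁻¹ with hg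
  have hg_lb : ∀ t, ‖μ‖ ≤ g t := by
    intro t
    have h1 : ‖μ‖ ^ (t+1) ≤ sEnt E (t+1) := hsle (t+1)
    have h2 := Real.rpow_le_rpow (by positivity) h1
      (by positivity : (0:ℝ) ≤ (((t+1:ℕ):ℝ))⁻¹)
    rwa [← Real.rpow_natCast ‖μ‖ (t+1), ← Real.rpow_mul (norm_nonneg μ),
      mul_inv_cancel₀ (by positivity), Real.rpow_one] at h2
  set ρ := ⨅ t, g t with hρdef
  have hbdd : BddBelow (Set.range g) := ⟨‖μ‖, by rintro _ ⟨t, rfl⟩; exact hg_lb t⟩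
  have hρ_lb : ‖μ‖ ≤ ρ := le_ciInf hg_lb
  have hρ1 : 1 < ρ := lt_of_lt_of_le hμ1 hρ_lb
  have hρ0 : (0:ℝ) < ρ := by linarith
  have hρ_le' : ∀ t, ρ ^ t ≤ sEnt E t := by
    intro t
    cases t with
    | zero =>
      rw [pow_zero]
      calc (1:ℝ) = ‖μ‖ ^ 0 := by rw [pow_zero]
        _ ≤ sEnt E 0 := hsle 0
    | succ t =>
      have h1 : ρ ≤ g t := ciInf_le hbdd t
      have h2 := pow_le_pow_left₀ hρ0.le h1 (t+1)
      rwa [hg, Real.rpow_inv_natCast_pow (hs_pos _).le (Nat.succ_ne_zero t)] at h2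
  -- key approximation
  have approx : ∀ ε : ℝ, 0 < ε → ∃ w ∈ stdSimplex ℝ (Fin (n+1)),
      ∀ a, |(A *ᵥ w) a - ρ * w a| ≤ ε := by
    intro ε hε
    obtain ⟨k0, hk0⟩ := exists_nat_ge ((2*(ρ+1)+1)/ε)
    set k : ℕ := k0 + 1 with hkdef
    have hkpos : (0:ℝ) < k := by positivity
    have hk1 : (1:ℝ) ≤ k := by exact_mod_cast Nat.one_le_iff_ne_zero.2 (by omega)
    have hkε : (2*(ρ+1)+1)/ε ≤ k := le_trans hk0 (by rw [hkdef]; push_cast; linarith)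
    set δ : ℝ := (k:ℝ)⁻¹ with hδdef
    have hδpos : 0 < δ := inv_pos.2 hkpos
    have hδ1 : δ ≤ 1 := by
      rw [hδdef]
      calc (k:ℝ)⁻¹ ≤ 1⁻¹ := by apply inv_anti₀ <;> linarith
        _ = 1 := inv_one
    set s' : ℝ := ρ + δ with hs'def
    have hs'ρ : ρ < s' := by rw [hs'def]; linarith
    have hs'pos : (0:ℝ) < s' := by linarith
    have hs'ne : s' ≠ 0 := hs'pos.ne'
    have hs'1 : (1:ℝ) < s' := by linarith
    have hs'le : s' ≤ ρ + 1 := by rw [hs'def]; linarith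
    obtain ⟨t0, ht0⟩ : ∃ t, g t < s' := exists_lt_of_ciInf_lt (hρdef ▸ hs'ρ)
    set p := t0 + 1 with hpdef
    have hsp : sEnt E p ≤ s' ^ p := by
      have h2 := pow_le_pow_left₀ (Real.rpow_nonneg (hs_pos p).le _) ht0.le p
      rwa [Real.rpow_inv_natCast_pow (hs_pos p).le (Nat.succ_ne_zero t0)] at h2
    have hB : ∀ M : ℕ, 1 ≤ M → sEnt E (M * p) ≤ (sEnt E p) ^ M := by
      intro M hM
      induction M, hM using Nat.le_induction with
      | base => rw [one_mul, pow_one]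
      | succ M hM ih =>
        have hh : (M+1) * p = M * p + p := by ring
        rw [hh]
        calc sEnt E (M*p + p) ≤ sEnt E (M*p) * sEnt E p := sEnt_submul E hE _ _
          _ ≤ (sEnt E p)^M * sEnt E p := mul_le_mul_of_nonneg_right ih (hs_pos p).le
          _ = (sEnt E p)^(M+1) := (pow_succ _ _).symm
    set r : ℝ := ρ / s' with hrdef
    have hr0 : 0 ≤ r := div_nonneg hρ0.le hs'pos.le
    have hr1 : r < 1 := (div_lt_one hs'pos).2 hs'ρ
    have hsumgeo := (hasSum_geometric_of_lt_one hr0 hr1).tendsto_sum_nat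
    have hlim : (k:ℝ) < (1 - r)⁻¹ := by
      have h1 : 1 - r = δ / s' := by
        rw [hrdef, hs'def]
        field_simp
        ring
      rw [h1, inv_div, lt_div_iff₀ hδpos, hδdef, mul_inv_cancel₀ (ne_of_gt hkpos)]
      exact hs'1
    obtain ⟨T1, hT1⟩ := (hsumgeo.eventually (eventually_gt_nhds hlim)).exists
    set M := max 1 T1 with hMdef
    set T := M * p with hTdef
    have hM1 : 1 ≤ M := le_max_left _ _
    have hTT1 : T1 ≤ T := le_trans (le_max_right 1 T1)
      (Nat.le_mul_of_pos_right M (by omega))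
    have hT1le : (k:ℝ) < ∑ t ∈ Finset.range T, r ^ t :=
      lt_of_lt_of_le hT1
        (Finset.sum_le_sum_of_subset_of_nonneg (Finset.range_subset_range.2 hTT1)
          (fun t _ _ => pow_nonneg hr0 t))
    have hsT : sEnt E T ≤ s' ^ T := by
      calc sEnt E T ≤ (sEnt E p)^M := hB M hM1
        _ ≤ (s'^p)^M := pow_le_pow_left₀ (hs_pos p).le hsp M
        _ = s' ^ T := by rw [← pow_mul, Nat.mul_comm]
    set u : Fin (n+1) → ℝ := fun _ => 1 with hu
    set V : Fin (n+1) → ℝ := ∑ t ∈ Finset.range T, (s'⁻¹)^t • (A ^ t *ᵥ u) with hV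
    have hAtu : ∀ (t:ℕ) (a : Fin (n+1)), (A ^ t *ᵥ u) a = ∑ j, ((E^t) a j : ℝ) := by
      intro t a
      rw [hA, toR_pow]
      simp [Matrix.mulVec, dotProduct, toR, hu]
    have hAtu_nonneg : ∀ (t:ℕ) (a : Fin (n+1)), 0 ≤ (A^t *ᵥ u) a := fun t a => by
      rw [hAtu]; exact Finset.sum_nonneg fun j _ => hnnR t a j
    have hAtu_sum : ∀ t : ℕ, ∑ a, (A^t *ᵥ u) a = sEnt E t := fun t => by
      unfold sEnt
      exact Finset.sum_congr rfl fun a _ => hAtu t a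
    have hAtu_le : ∀ (t:ℕ) (a : Fin (n+1)), (A^t *ᵥ u) a ≤ sEnt E t := by
      intro t a
      rw [← hAtu_sum t]
      exact Finset.single_le_sum (fun b _ => hAtu_nonneg t b) (Finset.mem_univ a)
    have hVa : ∀ a, V a = ∑ t ∈ Finset.range T, (s'⁻¹)^t * (A^t *ᵥ u) a := by
      intro a
      rw [hV]
      simp [Finset.sum_apply]
    have hV_nonneg : ∀ a, 0 ≤ V a := fun a => by
      rw [hVa]
      exact Finset.sum_nonneg fun t _ =>
        mul_nonneg (pow_nonneg (inv_nonneg.2 hs'pos.le) t) (hAtu_nonneg t a)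
    set N := ∑ a, V a with hN
    have hNval : N = ∑ t ∈ Finset.range T, (s'⁻¹)^t * sEnt E t := by
      rw [hN, Finset.sum_congr rfl fun a _ => hVa a, Finset.sum_comm]
      refine Finset.sum_congr rfl fun t _ => ?_
      rw [← Finset.mul_sum, hAtu_sum]
    have hNge : (k:ℝ) < N := by
      rw [hNval]
      refine lt_of_lt_of_le hT1le (Finset.sum_le_sum fun t _ => ?_)
      rw [hrdef, div_pow, div_eq_mul_inv, ← inv_pow, mul_comm]
      exact mul_le_mul_of_nonneg_left (hρ_le' t) (pow_nonneg (inv_nonneg.2 hs'pos.le) t)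
    have hNpos : (0:ℝ) < N := lt_trans hkpos hNge
    have hVaN : ∀ a, V a ≤ N := by
      intro a
      rw [hN]
      exact Finset.single_le_sum (fun b _ => hV_nonneg b) (Finset.mem_univ a)
    have hAV : A *ᵥ V = ∑ t ∈ Finset.range T, (s'⁻¹)^t • (A^(t+1) *ᵥ u) := by
      have h1 : A *ᵥ V = A.mulVecLin V := rfl
      rw [h1, hV, map_sum]
      refine Finset.sum_congr rfl fun t _ => ?_
      rw [LinearMap.map_smul]
      congr 1
      show A *ᵥ (A^t *ᵥ u) = A^(t+1) *ᵥ u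
      rw [Matrix.mulVec_mulVec, ← pow_succ']
    have htel : s' • V - A *ᵥ V
        = s' • u - (s' * (s'⁻¹)^T) • (A^T *ᵥ u) := by
      set F : ℕ → Fin (n+1) → ℝ := fun t => (s' * (s'⁻¹)^t) • (A^t *ᵥ u) with hF
      have h0 : F 0 = s' • u := by
        rw [hF]
        simp [Matrix.one_mulVec]
      calc s' • V - A *ᵥ V = ∑ t ∈ Finset.range T, (F t - F (t+1)) := by
            rw [hV, hAV, Finset.smul_sum, ← Finset.sum_sub_distrib]
            refine Finset.sum_congr rfl fun t _ => ?_
            rw [hF, smul_smul]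
            congr 2
            rw [pow_succ', ← mul_assoc, mul_inv_cancel₀ hs'ne, one_mul]
        _ = F 0 - F T := Finset.sum_range_sub' F T
        _ = s' • u - (s' * (s'⁻¹)^T) • (A^T *ᵥ u) := by rw [h0]
    set w : Fin (n+1) → ℝ := N⁻¹ • V with hw
    have hw_mem : w ∈ stdSimplex ℝ (Fin (n+1)) := by
      refine ⟨fun a => mul_nonneg (inv_nonneg.2 hNpos.le) (hV_nonneg a), ?_⟩
      show ∑ a, N⁻¹ * V a = 1
      rw [← Finset.mul_sum, ← hN, inv_mul_cancel₀ hNpos.ne']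
    refine ⟨w, hw_mem, fun a => ?_⟩
    have hAwa : (A *ᵥ w) a = N⁻¹ * (A *ᵥ V) a := by
      rw [hw, Matrix.mulVec_smul]; rfl
    have htel_a : s' * V a - (A *ᵥ V) a = s' * 1 - (s' * (s'⁻¹)^T) * (A^T *ᵥ u) a := by
      have h := congrFun htel a
      simpa [hu] using h
    set c : ℝ := (s' * (s'⁻¹)^T) * (A^T *ᵥ u) a with hc
    have hcoef : 0 ≤ s' * (s'⁻¹)^T := by positivity
    have hc0 : 0 ≤ c := mul_nonneg hcoef (hAtu_nonneg T a)
    have hcs' : c ≤ s' := by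
      rw [hc]
      calc (s' * (s'⁻¹)^T) * (A^T *ᵥ u) a ≤ (s' * (s'⁻¹)^T) * sEnt E T :=
            mul_le_mul_of_nonneg_left (hAtu_le T a) hcoef
        _ ≤ (s' * (s'⁻¹)^T) * s' ^ T := mul_le_mul_of_nonneg_left hsT hcoef
        _ = s' := by
            rw [inv_pow]
            field_simp
    have hAVa : (A *ᵥ V) a - ρ * V a = δ * V a - s' + c := by
      have h1 : (A *ᵥ V) a = s' * V a - s' + c := by linarith [htel_a]
      rw [h1, hs'def]; ring
    have habs : |(A *ᵥ V) a - ρ * V a| ≤ δ * N + 2 * s' := by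
      rw [hAVa, abs_le]
      have e1 : 0 ≤ δ * V a := mul_nonneg hδpos.le (hV_nonneg a)
      have e2 : δ * V a ≤ δ * N := mul_le_mul_of_nonneg_left (hVaN a) hδpos.le
      have e3 : 0 ≤ δ * N := mul_nonneg hδpos.le hNpos.le
      constructor
      · linarith
      · linarith
    have hfin : |(A *ᵥ w) a - ρ * w a| = N⁻¹ * |(A *ᵥ V) a - ρ * V a| := by
      have h1 : (A *ᵥ w) a - ρ * w a = N⁻¹ * ((A *ᵥ V) a - ρ * V a) := by
        rw [hAwa]
        show N⁻¹ * (A *ᵥ V) a - ρ * (N⁻¹ * V a) = _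
        ring
      rw [h1, abs_mul, abs_of_nonneg (inv_nonneg.2 hNpos.le)]
    calc |(A *ᵥ w) a - ρ * w a| = N⁻¹ * |(A *ᵥ V) a - ρ * V a| := hfin
      _ ≤ N⁻¹ * (δ * N + 2 * s') := mul_le_mul_of_nonneg_left habs (inv_nonneg.2 hNpos.le)
      _ = δ + 2 * s' / N := by
          rw [mul_add, mul_comm δ N, ← mul_assoc, inv_mul_cancel₀ hNpos.ne', one_mul,
            div_eq_mul_inv, mul_comm (2 * s') N⁻¹]
      _ ≤ δ + 2 * s' / k := by
          have h2s : (0:ℝ) ≤ 2 * s' := by positivity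
          have hdd : 2 * s' / N ≤ 2 * s' / k :=
            div_le_div_of_nonneg_left h2s hkpos hNge.le
          linarith
      _ = (1 + 2 * s') / k := by
          rw [add_div, hδdef, inv_eq_one_div]
      _ ≤ (2*(ρ+1)+1) / k := by
          refine (div_le_div_iff_of_pos_right hkpos).2 ?_
          linarith
      _ ≤ ε := by
          rw [div_le_iff₀ hkpos]
          have := (div_le_iff₀ hε).1 hkε
          linarith
  -- conclude via compactness
  have hcont : Continuous fun x : Fin (n+1) → ℝ => dist (A *ᵥ x) (ρ • x) := by
    refine Continuous.dist ?_ (continuous_const_smul ρ)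
    exact (Matrix.mulVecLin A).continuous_of_finiteDimensional
  obtain ⟨v, hv_mem, hv_min⟩ := (isCompact_stdSimplex ℝ (Fin (n+1))).exists_isMinOn
    ⟨Pi.single 0 1, single_mem_stdSimplex ℝ 0⟩ hcont.continuousOn
  refine ⟨ρ, hρ1, v, hv_mem, ?_⟩
  have hzero : dist (A *ᵥ v) (ρ • v) ≤ 0 := by
    refine le_of_forall_pos_le_add fun ε hεp => ?_
    obtain ⟨w, hwmem, hwb⟩ := approx ε hεp
    have h1 : dist (A *ᵥ v) (ρ • v) ≤ dist (A *ᵥ w) (ρ • w) := hv_min hwmem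
    have h2 : dist (A *ᵥ w) (ρ • w) ≤ ε := by
      rw [dist_pi_le_iff hεp.le]
      intro a
      rw [Real.dist_eq]
      exact hwb a
    linarith
  exact dist_eq_zero.1 (le_antisymm hzero dist_nonneg)


end AuxPF

theorem stmt12 (n : ℕ) (hn : 1 ≤ n) (E : MatZ n) (hE : inSigma E) (i : Fin (n + 1))
    (hfix : E *ᵥ Pi.single i 1 = Pi.single i 1)
    (hspec : ∃ μ : ℂ, μ ∈ spectrum ℂ (E.map ((↑) : ℤ → ℂ)) ∧ 1 < ‖μ‖) :
    Pi.single i (1 : ℝ) ∈ (⋂ t : ℕ, simg (E ^ t)) ∧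
    (∃ v ∈ ⋂ t : ℕ, simg (E ^ t),
      v ∈ stdSimplex ℝ (Fin (n + 1)) ∧ v ≠ Pi.single i (1 : ℝ) ∧
      ∃ ρ : ℝ, 1 < ρ ∧ toR E *ᵥ v = ρ • v) ∧
    ¬ ∃ p, (⋂ t : ℕ, simg (E ^ t)) = {p} := by
  obtain ⟨μ, hμ, hμ1⟩ := hspec
  -- powers fix the single vector (over ℤ)
  have hfixt : ∀ t : ℕ, (E ^ t) *ᵥ Pi.single i 1 = Pi.single i 1 := by
    intro t
    induction t with
    | zero => rw [pow_zero, Matrix.one_mulVec]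
    | succ t ih => rw [pow_succ', ← Matrix.mulVec_mulVec, ih, hfix]
  -- over ℝ
  have hfixR : ∀ t : ℕ, toR (E ^ t) *ᵥ Pi.single i (1:ℝ) = Pi.single i (1:ℝ) := by
    intro t
    funext a
    have h1 : (toR (E ^ t) *ᵥ Pi.single i (1:ℝ)) a = ((E ^ t) a i : ℝ) := by
      simp [toR, Matrix.mulVec_single]
    have h2 : ((E ^ t) *ᵥ Pi.single i 1) a = (E ^ t) a i := by
      simp [Matrix.mulVec_single]
    have h3 : (E ^ t) a i = (Pi.single i 1 : Fin (n+1) → ℤ) a := by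
      rw [← h2, hfixt t]
    rw [h1, h3]
    by_cases h : a = i <;> simp [Pi.single_apply, h]
  have hsum_single : ∑ a, (Pi.single i (1:ℝ)) a = 1 := by simp
  have hmem1 : Pi.single i (1 : ℝ) ∈ (⋂ t : ℕ, simg (E ^ t)) := by
    rw [Set.mem_iInter]
    intro t
    refine ⟨Pi.single i 1, single_mem_stdSimplex ℝ i, ?_⟩
    rw [projAct, hfixR t, hsum_single]
    simp
  -- Perron eigenvector
  obtain ⟨ρ, hρ1, v, hv_mem, hv_eig⟩ := perron E hE.2 μ hμ hμ1
  have hρ0 : (0:ℝ) < ρ := by linarith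
  have hv_eig_t : ∀ t : ℕ, toR (E ^ t) *ᵥ v = ρ ^ t • v := by
    intro t
    rw [← toR_pow]
    induction t with
    | zero => simp
    | succ t ih =>
      rw [pow_succ', ← Matrix.mulVec_mulVec, ih, Matrix.mulVec_smul, hv_eig,
        smul_smul, pow_succ', mul_comm ρ (ρ ^ t), mul_comm]
  have hv_sum : ∑ a, v a = 1 := hv_mem.2
  have hmem2 : v ∈ (⋂ t : ℕ, simg (E ^ t)) := by
    rw [Set.mem_iInter]
    intro t
    refine ⟨v, hv_mem, ?_⟩
    rw [projAct, hv_eig_t t]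
    have hsum : ∑ a, (ρ ^ t • v) a = ρ ^ t := by
      simp only [Pi.smul_apply, smul_eq_mul, ← Finset.mul_sum, hv_sum, mul_one]
    rw [hsum, smul_smul, inv_mul_cancel₀ (pow_pos hρ0 t).ne', one_smul]
  have hv_ne : v ≠ Pi.single i (1:ℝ) := by
    intro hcontra
    have h1 : toR E *ᵥ Pi.single i (1:ℝ) = Pi.single i (1:ℝ) := by
      have := hfixR 1
      rwa [pow_one] at this
    rw [hcontra, h1] at hv_eig
    have h2 := congrFun hv_eig i
    simp at h2
    linarith
  refine ⟨hmem1, ⟨v, hmem2, hv_mem, hv_ne, ρ, hρ1, hv_eig⟩, ?_⟩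
  rintro ⟨p, hp⟩
  rw [hp] at hmem1 hmem2
  rw [Set.mem_singleton_iff] at hmem1 hmem2
  exact hv_ne (hmem2.trans hmem1.symm)
end

section
/- Let (A_0, A_1) be a topologically contractive pair of matrices in Σ. Then for every nonempty word v = a_0…a_{t−1} ∈ {0,1}^t, the product A_v = A_{a_0}⋯A_{a_{t−1}} fixes at most one vertex of Δ: there do not exist indices i ≠ j with A_v e_i = e_i and A_v e_j = e_j. -/
open Matrix

lemma inSigma_one {n : ℕ} : inSigma (1 : MatZ n) :=
  ⟨by simp, fun i j => by by_cases h : i = j <;> simp [Matrix.one_apply, h]⟩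

lemma inSigma_mul {n : ℕ} {A B : MatZ n} (hA : inSigma A) (hB : inSigma B) :
    inSigma (A * B) := by
  refine ⟨by rw [Matrix.det_mul]; exact hA.1.mul hB.1, fun i j => ?_⟩
  rw [Matrix.mul_apply]
  exact Finset.sum_nonneg fun k _ => mul_nonneg (hA.2 i k) (hB.2 k j)

lemma inSigma_wordProd {n : ℕ} {A0 A1 : MatZ n} (h0 : inSigma A0) (h1 : inSigma A1) :
    ∀ w : List Bool, inSigma (wordProd A0 A1 w)
  | [] => by simpa [wordProd] using inSigma_one
  | b :: w => by
    have h : wordProd A0 A1 (b :: w) = (bif b then A1 else A0) * wordProd A0 A1 w := by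
      simp [wordProd]
    rw [h]
    exact inSigma_mul (by cases b <;> simpa) (inSigma_wordProd h0 h1 w)

lemma wordProd_append {n : ℕ} (A0 A1 : MatZ n) (w1 w2 : List Bool) :
    wordProd A0 A1 (w1 ++ w2) = wordProd A0 A1 w1 * wordProd A0 A1 w2 := by
  simp [wordProd, List.map_append, List.prod_append]

lemma wordProd_join_replicate {n : ℕ} (A0 A1 : MatZ n) (v : List Bool) :
    ∀ q : ℕ, wordProd A0 A1 (List.flatten (List.replicate q v)) = (wordProd A0 A1 v) ^ q
  | 0 => by simp [wordProd]
  | q+1 => by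
    rw [List.replicate_succ, List.flatten_cons, wordProd_append,
      wordProd_join_replicate A0 A1 v q, pow_succ']

lemma range_map_mod (v : List Bool) (hv : v ≠ []) (t : ℕ) :
    (List.range t).map (fun s => v.getD (s % v.length) false) =
      (List.replicate (t / v.length) v).flatten ++ v.take (t % v.length) := by
  have hL : 0 < v.length := List.length_pos_iff.mpr hv
  induction t with
  | zero => simp
  | succ t ih =>
    rw [List.range_succ, List.map_append, ih]
    simp only [List.map_cons, List.map_nil]
    have hr : t % v.length < v.length := Nat.mod_lt _ hL
    have hstep : v.take (t % v.length) ++ [v.getD (t % v.length) false]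
        = v.take (t % v.length + 1) := by
      rw [List.take_succ]
      simp [List.getD, List.getElem?_eq_getElem hr]
    have hcomm : v.length * (t / v.length) = t / v.length * v.length := mul_comm _ _
    have ht : t = t / v.length * v.length + t % v.length := by
      have := Nat.div_add_mod t v.length; omega
    by_cases h : t % v.length + 1 = v.length
    · have ht1 : t + 1 = (t / v.length + 1) * v.length := by
        have hmul : (t / v.length + 1) * v.length = t / v.length * v.length + v.length := by ring
        omega
      have hdiv : (t+1) / v.length = t / v.length + 1 := by
        rw [ht1, Nat.mul_div_cancel _ hL]
      have hmod : (t+1) % v.length = 0 := by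
        rw [ht1, Nat.mul_mod_left]
      rw [hdiv, hmod, List.append_assoc, hstep, h, List.take_length, List.take_zero,
        List.append_nil, List.replicate_succ', List.flatten_append]
      simp
    · have ht1 : t + 1 = (t % v.length + 1) + t / v.length * v.length := by omega
      have hdiv : (t+1) / v.length = t / v.length := by
        rw [ht1, Nat.add_mul_div_right _ _ hL, Nat.div_eq_of_lt (by omega), Nat.zero_add]
      have hmod : (t+1) % v.length = t % v.length + 1 := by
        rw [ht1, Nat.add_mul_mod_self_right, Nat.mod_eq_of_lt (by omega)]
      rw [hdiv, hmod, List.append_assoc, hstep]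

lemma pow_fix {n : ℕ} (B : MatZ n) (x : Fin (n+1) → ℤ) (hx : B *ᵥ x = x) :
    ∀ m : ℕ, B ^ m *ᵥ x = x
  | 0 => by simp
  | m+1 => by
    rw [pow_succ, ← Matrix.mulVec_mulVec, hx, pow_fix B x hx m]

lemma toR_mul {n : ℕ} (A B : MatZ n) : toR (A * B) = toR A * toR B := by
  ext i j
  simp [toR, Matrix.map_apply, Matrix.mul_apply]


theorem stmt14 (n : ℕ) (hn : 1 ≤ n) (A0 A1 : MatZ n)
    (h0 : inSigma A0) (h1 : inSigma A1)
    (hnp0 : ¬ IsPermMat A0) (hnp1 : ¬ IsPermMat A1)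
    (hC : Contractive A0 A1) (v : List Bool) (hv : v ≠ []) :
    ¬ ∃ i j : Fin (n + 1), i ≠ j ∧
      wordProd A0 A1 v *ᵥ Pi.single i 1 = Pi.single i 1 ∧
      wordProd A0 A1 v *ᵥ Pi.single j 1 = Pi.single j 1 := by
  rintro ⟨i, j, hij, hi, hj⟩
  have hL : 0 < v.length := List.length_pos_iff.mpr hv
  set a : ℕ → Bool := fun s => v.getD (s % v.length) false with ha
  obtain ⟨p, hp⟩ := hC a
  have key : ∀ k : Fin (n+1), wordProd A0 A1 v *ᵥ Pi.single k 1 = Pi.single k 1 →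
      Pi.single k (1:ℝ) ∈ ⋂ t : ℕ, simg (wordProd A0 A1 ((List.range t).map a)) := by
    intro k hk
    rw [Set.mem_iInter]
    intro t
    have hdecomp : (List.range t).map a =
        (List.replicate (t / v.length) v).flatten ++ v.take (t % v.length) :=
      range_map_mod v hv t
    set W := wordProd A0 A1 ((List.range t).map a) with hWdef
    set S := wordProd A0 A1 (v.drop (t % v.length)) with hSdef
    have hWS : W * S = (wordProd A0 A1 v) ^ (t / v.length + 1) := by
      rw [hWdef, hdecomp, wordProd_append, wordProd_join_replicate, mul_assoc,
        ← wordProd_append, List.take_append_drop, pow_succ]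
    have hSsig : inSigma S := inSigma_wordProd h0 h1 _
    have hfix : (W * S) *ᵥ Pi.single k 1 = Pi.single k 1 := by
      rw [hWS]; exact pow_fix _ _ hk _
    have hcolnz : S *ᵥ (Pi.single k 1 : Fin (n+1) → ℤ) ≠ 0 := by
      intro h
      have hzero : (Pi.single k 1 : Fin (n+1) → ℤ) = 0 := by
        calc (Pi.single k 1 : Fin (n+1) → ℤ)
            = (S⁻¹ * S) *ᵥ Pi.single k 1 := by
              rw [Matrix.nonsing_inv_mul S hSsig.1, Matrix.one_mulVec]
          _ = S⁻¹ *ᵥ (S *ᵥ Pi.single k 1) := by rw [Matrix.mulVec_mulVec]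
          _ = 0 := by rw [h, Matrix.mulVec_zero]
      have := congrFun hzero k
      simp at this
    obtain ⟨m0, hm0⟩ : ∃ m0, S m0 k ≠ 0 := by
      by_contra hc
      push_neg at hc
      apply hcolnz
      rw [Matrix.mulVec_single_one]
      funext m
      simpa using hc m
    set u : Fin (n+1) → ℝ := fun m => ((S m k : ℤ) : ℝ) with hu
    have huS : toR S *ᵥ Pi.single k (1:ℝ) = u := by
      rw [Matrix.mulVec_single_one]
      funext m
      rfl
    set c : ℝ := ∑ m, u m with hcdef
    have hc : 0 < c := by
      refine Finset.sum_pos'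
        (fun m _ => show (0:ℝ) ≤ ((S m k : ℤ) : ℝ) by exact_mod_cast hSsig.2 m k)
        ⟨m0, Finset.mem_univ _, ?_⟩
      have h2 : 0 < S m0 k := lt_of_le_of_ne (hSsig.2 m0 k) (Ne.symm hm0)
      show (0:ℝ) < ((S m0 k : ℤ) : ℝ)
      exact_mod_cast h2
    set y : Fin (n+1) → ℝ := c⁻¹ • u with hy
    have hymem : y ∈ stdSimplex ℝ (Fin (n+1)) := by
      constructor
      · intro m
        have hum : 0 ≤ u m := show (0:ℝ) ≤ ((S m k : ℤ) : ℝ) by exact_mod_cast hSsig.2 m k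
        exact mul_nonneg (inv_nonneg.mpr hc.le) hum
      · show ∑ m, (c⁻¹ • u) m = 1
        simp only [Pi.smul_apply, smul_eq_mul]
        rw [← Finset.mul_sum, ← hcdef, inv_mul_cancel₀ hc.ne']
    have hcast : toR (W * S) *ᵥ Pi.single k (1:ℝ) = Pi.single k 1 := by
      rw [Matrix.mulVec_single_one] at hfix ⊢
      funext m
      have h1 := congrFun hfix m
      rw [Matrix.col_apply] at h1
      rw [Matrix.col_apply]
      rcases eq_or_ne m k with rfl | hmk
      · rw [Pi.single_eq_same] at h1 ⊢
        show ((W*S) m m : ℤ) = (1:ℝ)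
        rw [h1]; norm_num
      · rw [Pi.single_eq_of_ne hmk] at h1 ⊢
        show ((W*S) m k : ℤ) = (0:ℝ)
        rw [h1]; norm_num
    have hmv : toR W *ᵥ y = c⁻¹ • (Pi.single k 1 : Fin (n+1) → ℝ) := by
      rw [hy, Matrix.mulVec_smul, ← huS, Matrix.mulVec_mulVec, ← toR_mul, hcast]
    refine ⟨y, hymem, ?_⟩
    show projAct (toR W) y = Pi.single k 1
    unfold projAct
    rw [hmv]
    have hsum : ∑ m, (c⁻¹ • (Pi.single k 1 : Fin (n+1) → ℝ)) m = c⁻¹ := by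
      simp only [Pi.smul_apply, smul_eq_mul]
      rw [← Finset.mul_sum]
      simp [Pi.single_apply]
    rw [hsum, inv_inv, smul_smul, mul_inv_cancel₀ hc.ne', one_smul]
  have hi' := key i hi
  have hj' := key j hj
  rw [hp, Set.mem_singleton_iff] at hi' hj'
  have heq : (Pi.single i 1 : Fin (n+1) → ℝ) = Pi.single j 1 := hi'.trans hj'.symm
  have := congrFun heq i
  rw [Pi.single_eq_same, Pi.single_eq_of_ne hij] at this
  exact one_ne_zero this
end

section
/- The characteristic polynomial of the Mönkemeyer matrix M_0 = NFR is (x − 1)(x^n − 1), and the characteristic polynomial of M_1 = LR is x^{n+1} − x − 1. -/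
open Matrix

namespace Stmt17Aux

open Polynomial

/-- The `m × m` matrix `X·I - (cyclic shift)`, with conditions phrased in `ℕ`. -/
noncomputable def Ccyc (m : ℕ) : Matrix (Fin m) (Fin m) ℤ[X] :=
  Matrix.of fun i j => (if (i:ℕ) = (j:ℕ) then X else 0) - (if (i:ℕ) = (j:ℕ) + 1 then 1 else 0)
    - (if (i:ℕ) = 0 ∧ (j:ℕ) + 1 = m then 1 else 0)

lemma Ccyc_det : ∀ k : ℕ, (Ccyc (k+1)).det = X^(k+1) - 1 := by
  intro k
  match k with
  | 0 =>
    rw [det_fin_one]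
    simp [Ccyc]
  | l+1 =>
    rw [show l+1+1 = (l+1).succ from rfl, det_succ_row_zero]
    rw [← Finset.sum_subset (s₁ := ({0, Fin.last (l+1)} : Finset (Fin (l+2)))) (by simp) ?_]
    · rw [Finset.sum_pair (by simp)]
      have hA : (Ccyc (l+2)).submatrix Fin.succ ((0 : Fin (l+2)).succAbove) =
          ((Ccyc (l+2)).submatrix Fin.succ Fin.succ) := by
        ext i j; rw [submatrix_apply, submatrix_apply, Fin.zero_succAbove]
      have hB : (Ccyc (l+2)).submatrix Fin.succ ((Fin.last (l+1)).succAbove) =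
          ((Ccyc (l+2)).submatrix Fin.succ Fin.castSucc) := by
        ext i j; rw [submatrix_apply, submatrix_apply, Fin.succAbove_last]
      rw [hA, hB]
      have dA : ((Ccyc (l+2)).submatrix Fin.succ Fin.succ).det = X^(l+1) := by
        rw [det_of_lowerTriangular _ ?_]
        · have hd : ∀ i ∈ Finset.univ, (Ccyc (l+2)).submatrix Fin.succ Fin.succ i i = X := by
            intro i _
            simp only [Ccyc, submatrix_apply, of_apply, Fin.val_succ]
            split_ifs <;> first | ring1 | (exfalso; first | omega | (simp only [true_and, and_true, false_and, and_false, not_true, not_false_eq_true, not_and] at *; try omega))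
          rw [Finset.prod_congr rfl hd]
          simp
        · intro i j h
          simp only [Fin.lt_def, OrderDual.toDual_lt_toDual] at h
          simp only [Ccyc, submatrix_apply, of_apply, Fin.val_succ]
          split_ifs <;> first | ring1 | (exfalso; first | omega | (simp only [true_and, and_true, false_and, and_false, not_true, not_false_eq_true, not_and] at *; try omega))
      have dB : ((Ccyc (l+2)).submatrix Fin.succ Fin.castSucc).det = (-1)^(l+1) := by
        rw [det_of_upperTriangular ?_]
        · have hd : ∀ i ∈ Finset.univ,
              (Ccyc (l+2)).submatrix Fin.succ Fin.castSucc i i = -1 := by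
            intro i _
            simp only [Ccyc, submatrix_apply, of_apply, Fin.val_succ, Fin.coe_castSucc]
            split_ifs <;> first | ring1 | (exfalso; first | omega | (simp only [true_and, and_true, false_and, and_false, not_true, not_false_eq_true, not_and] at *; try omega))
          rw [Finset.prod_congr rfl hd]
          simp
        · intro i j h
          simp only [id, Fin.lt_def] at h
          simp only [Ccyc, submatrix_apply, of_apply, Fin.val_succ, Fin.coe_castSucc]
          split_ifs <;> first | ring1 | (exfalso; first | omega | (simp only [true_and, and_true, false_and, and_false, not_true, not_false_eq_true, not_and] at *; try omega))
      rw [dA, dB]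
      have e0 : Ccyc (l+2) 0 0 = X := by
        simp only [Ccyc, of_apply, Fin.val_zero]
        split_ifs <;> first | ring1 | (exfalso; first | omega | (simp only [true_and, and_true, false_and, and_false, not_true, not_false_eq_true, not_and] at *; try omega))
      have el : Ccyc (l+2) 0 (Fin.last (l+1)) = -1 := by
        simp only [Ccyc, of_apply, Fin.val_zero, Fin.val_last]
        split_ifs <;> first | ring1 | (exfalso; first | omega | (simp only [true_and, and_true, false_and, and_false, not_true, not_false_eq_true, not_and] at *; try omega))
      rw [e0, el]
      simp only [Fin.val_zero, Fin.val_last, pow_zero, one_mul]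
      have h2 : ((-1:ℤ[X])^(l+1)) * ((-1:ℤ[X])^(l+1)) = 1 := by
        rw [← pow_add]; exact Even.neg_one_pow ⟨l+1, by ring⟩
      calc X * X^(l+1) + (-1)^(l+1) * -1 * (-1)^(l+1)
          = X * X^(l+1) + ((-1:ℤ[X])^(l+1) * ((-1:ℤ[X])^(l+1))) * (-1) := by ring
        _ = X^(l+1+1) - 1 := by rw [h2, ← pow_succ']; ring
    · intro j hj hjs
      simp only [Finset.mem_insert, Finset.mem_singleton] at hjs
      push_neg at hjs
      have h1 : (j:ℕ) ≠ 0 := by simpa [Fin.ext_iff, -Fin.val_eq_zero_iff] using hjs.1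
      have h2 : (j:ℕ) ≠ l+1 := by simpa [Fin.ext_iff] using hjs.2
      have hz : Ccyc (l+2) 0 j = 0 := by
        simp only [Ccyc, of_apply, Fin.val_zero]
        have h3 : ¬ ((j:ℕ) + 1 = l + 2) := by omega
        simp [Ne.symm h1, h2, h3]
      rw [hz]; ring

lemma mulR (n : ℕ) (A : MatZ n) (i j : Fin (n+1)) :
    (A * Rmat n) i j = A i (j + 1) := by
  simp [Rmat, mul_apply]

lemma mulF (n : ℕ) (A : MatZ n) (i j : Fin (n+1)) :
    (A * Fmat n) i j = A i (Equiv.swap 0 1 j) := by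
  simp [Fmat, mul_apply]

lemma Fmul (n : ℕ) (A : MatZ n) (i j : Fin (n+1)) :
    (Fmat n * A) i j = A (Equiv.swap 0 1 i) j := by
  have : ∀ k : Fin (n+1), (i = Equiv.swap 0 1 k) = (k = Equiv.swap 0 1 i) := by
    intro k
    rw [eq_iff_iff]
    constructor <;> intro h <;> simp [h]
  simp only [Fmat, mul_apply, of_apply, this]
  simp

lemma Mon1_app (n : ℕ) (i j : Fin (n+1)) :
    Mon1 n i j = if i = j + 1 then 1 else if j + 1 = 0 ∧ i = 1 then 1 else 0 := by
  rw [Mon1, Lmat, mulR, mulF, Fmul, Nmat]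
  simp only [of_apply, Equiv.apply_eq_iff_eq]
  congr 2
  rw [eq_iff_iff]
  constructor
  · rintro ⟨h1, h2⟩
    refine ⟨?_, ?_⟩
    · rwa [Equiv.swap_apply_eq_iff, Equiv.swap_apply_right] at h1
    · rwa [Equiv.swap_apply_eq_iff, Equiv.swap_apply_left] at h2
  · rintro ⟨h1, h2⟩
    rw [h1, h2]
    simp

lemma Mon0_app (n : ℕ) (i j : Fin (n+1)) :
    Mon0 n i j = if i = Equiv.swap 0 1 (j + 1) then 1 else if j + 1 = 0 ∧ i = 0 then 1 else 0 := by
  rw [Mon0, mulR, mulF, Nmat]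
  simp only [of_apply]
  congr 2
  rw [eq_iff_iff]
  constructor
  · rintro ⟨h1, h2⟩
    exact ⟨by rwa [Equiv.swap_apply_eq_iff, Equiv.swap_apply_right] at h1, h2⟩
  · rintro ⟨h1, h2⟩
    rw [h1, h2]
    simp

lemma Mon1_appN (m : ℕ) (i j : Fin (m+2)) :
    Mon1 (m+1) i j = if (j:ℕ) = m+1 then (if (i:ℕ) ≤ 1 then 1 else 0)
      else (if (i:ℕ) = (j:ℕ)+1 then 1 else 0) := by
  rw [Mon1_app]
  rcases eq_or_ne (j:ℕ) (m+1) with hj | hj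
  · have hj' : j = Fin.last (m+1) := by rw [Fin.ext_iff]; simpa using hj
    subst hj'
    have h0 : Fin.last (m+1) + 1 = 0 := by
      rw [Fin.ext_iff, Fin.val_add_one]
      simp
    rw [h0]
    simp only [Fin.val_last, if_pos rfl, true_and]
    simp only [Fin.ext_iff, Fin.val_zero, Fin.val_one, true_and, false_and, and_true, and_false]
    split_ifs <;> first | omega | tauto
  · have hlt : j < Fin.last (m+1) := by
      rw [Fin.lt_def, Fin.val_last]
      omega
    have h1 : ((j+1 : Fin (m+2)):ℕ) = (j:ℕ)+1 := Fin.val_add_one_of_lt hlt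
    have h2 : (j+1 : Fin (m+2)) ≠ 0 := by
      simp [Fin.ext_iff, -Fin.val_eq_zero_iff, h1]
    rw [if_neg hj]
    simp only [Fin.ext_iff, h1, Fin.val_zero, Fin.val_one, true_and, false_and, and_true, and_false]
    split_ifs <;> first | omega | tauto

lemma Mon0_appN (m : ℕ) (i j : Fin (m+2)) :
    Mon0 (m+1) i j = if (j:ℕ) = 0 then (if (i:ℕ) = 0 then 1 else 0)
      else if (j:ℕ) = m+1 then (if (i:ℕ) ≤ 1 then 1 else 0)
      else (if (i:ℕ) = (j:ℕ)+1 then 1 else 0) := by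
  rw [Mon0_app]
  rcases eq_or_ne (j:ℕ) (m+1) with hj | hj
  · have hj' : j = Fin.last (m+1) := by rw [Fin.ext_iff]; simpa using hj
    subst hj'
    have h0 : Fin.last (m+1) + 1 = 0 := by
      rw [Fin.ext_iff, Fin.val_add_one]
      simp
    rw [h0, Equiv.swap_apply_left]
    have t1 : ((Fin.last (m+1) : Fin (m+2)) : ℕ) ≠ 0 := by simp
    have t2 : ((Fin.last (m+1) : Fin (m+2)) : ℕ) = m+1 := by simp
    rw [if_neg t1, if_pos t2]
    simp only [Fin.ext_iff, Fin.val_zero, Fin.val_one, eq_self_iff_true, true_and, false_and,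
      and_true, and_false]
    split_ifs <;> first | omega | tauto
  · have hlt : j < Fin.last (m+1) := by
      rw [Fin.lt_def, Fin.val_last]
      omega
    have h1 : ((j+1 : Fin (m+2)):ℕ) = (j:ℕ)+1 := Fin.val_add_one_of_lt hlt
    have h2 : (j+1 : Fin (m+2)) ≠ 0 := by
      simp [Fin.ext_iff, -Fin.val_eq_zero_iff, h1]
    rcases eq_or_ne (j:ℕ) 0 with hj0 | hj0
    · have hj1 : (j+1 : Fin (m+2)) = 1 := by
        rw [Fin.ext_iff, h1, hj0, Fin.val_one]
      rw [hj1, Equiv.swap_apply_right, if_pos hj0]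
      simp only [Fin.ext_iff, Fin.val_zero, Fin.val_one, true_and, false_and, and_true, and_false]
      split_ifs <;> first | omega | tauto
    · have hsw : Equiv.swap (0 : Fin (m+2)) 1 (j+1) = j + 1 := by
        apply Equiv.swap_apply_of_ne_of_ne h2
        intro h
        have := congrArg Fin.val h
        rw [h1, Fin.val_one] at this
        omega
      rw [hsw, if_neg hj0, if_neg hj]
      simp only [Fin.ext_iff, h1, Fin.val_zero, Fin.val_one, true_and, false_and, and_true, and_false]
      split_ifs <;> first | omega | tauto

lemma charmatrix_entry {N : ℕ} (M : Matrix (Fin N) (Fin N) ℤ) (i j : Fin N) :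
    charmatrix M i j = (if i = j then X else 0) - C (M i j) := by
  rcases eq_or_ne i j with h | h
  · subst h; simp
  · simp [h]

end Stmt17Aux

open Stmt17Aux Polynomial in
theorem stmt17 (n : ℕ) (hn : 1 ≤ n) :
    (Mon0 n).charpoly = (Polynomial.X - 1) * (Polynomial.X ^ n - 1) ∧
    (Mon1 n).charpoly = Polynomial.X ^ (n + 1) - Polynomial.X - 1 := by
  obtain ⟨m, rfl⟩ : ∃ m, n = m + 1 := ⟨n - 1, by omega⟩
  constructor
  · -- Mon0
    rw [Matrix.charpoly]
    rw [det_succ_column_zero (A := charmatrix (Mon0 (m+1)))]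
    rw [Finset.sum_eq_single 0 ?_ (by simp)]
    · have hc : charmatrix (Mon0 (m+1)) 0 0 = X - 1 := by
        rw [charmatrix_entry, Mon0_appN]
        norm_num
      have hA : (charmatrix (Mon0 (m+1))).submatrix ((0 : Fin (m+2)).succAbove) Fin.succ =
          Ccyc (m+1) := by
        refine Matrix.ext fun i j => ?_
        rw [submatrix_apply, Fin.zero_succAbove, charmatrix_entry, Mon0_appN]
        simp only [Ccyc, of_apply, Fin.ext_iff, Fin.val_succ, apply_ite C, _root_.map_one, _root_.map_zero]
        split_ifs <;> first | ring1 | (exfalso; first | omega | assumption)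
      rw [hc, hA, Ccyc_det m]
      simp
    · intro i _ hi
      have : charmatrix (Mon0 (m+1)) i 0 = 0 := by
        rw [charmatrix_entry, Mon0_appN]
        have hi' : (i:ℕ) ≠ 0 := by
          simpa [Fin.ext_iff, -Fin.val_eq_zero_iff] using hi
        rw [if_neg (by simpa [Fin.ext_iff, -Fin.val_eq_zero_iff, eq_comm] using hi)]
        simp [hi']
      rw [this]
      ring
  · -- Mon1
    rw [Matrix.charpoly]
    rw [det_succ_row_zero (A := charmatrix (Mon1 (m+1)))]
    rw [← Finset.sum_subset (s₁ := ({0, Fin.last (m+1)} : Finset (Fin (m+2)))) (by simp) ?_]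
    · rw [Finset.sum_pair (by simp)]
      have hc0 : charmatrix (Mon1 (m+1)) 0 0 = X := by
        rw [charmatrix_entry, Mon1_appN]
        norm_num
      have hcl : charmatrix (Mon1 (m+1)) 0 (Fin.last (m+1)) = -1 := by
        rw [charmatrix_entry, Mon1_appN]
        have : (0 : Fin (m+2)) ≠ Fin.last (m+1) := by simp
        rw [if_neg this]
        simp
      have hA : (charmatrix (Mon1 (m+1))).submatrix Fin.succ ((0 : Fin (m+2)).succAbove) =
          Ccyc (m+1) := by
        refine Matrix.ext fun i j => ?_
        rw [submatrix_apply, Fin.zero_succAbove, charmatrix_entry, Mon1_appN]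
        simp only [Ccyc, of_apply, Fin.ext_iff, Fin.val_succ, apply_ite C, _root_.map_one, _root_.map_zero]
        split_ifs <;> first | ring1 | (exfalso; first | omega | assumption)
      have hB : ((charmatrix (Mon1 (m+1))).submatrix Fin.succ
          ((Fin.last (m+1)).succAbove)).det = (-1)^(m+1) := by
        have hBe : (charmatrix (Mon1 (m+1))).submatrix Fin.succ ((Fin.last (m+1)).succAbove) =
            (charmatrix (Mon1 (m+1))).submatrix Fin.succ Fin.castSucc := by
          ext i j; rw [submatrix_apply, submatrix_apply, Fin.succAbove_last]
        rw [hBe]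
        rw [det_of_upperTriangular ?_]
        · have hd : ∀ i ∈ Finset.univ,
              (charmatrix (Mon1 (m+1))).submatrix Fin.succ Fin.castSucc i i = -1 := by
            intro i _
            rw [submatrix_apply, charmatrix_entry, Mon1_appN]
            simp only [Fin.ext_iff, Fin.val_succ, Fin.coe_castSucc, apply_ite C,
              _root_.map_one, _root_.map_zero]
            split_ifs <;> first | ring1 | (exfalso; first | omega | assumption | tauto)
          rw [Finset.prod_congr rfl hd]
          simp
        · intro i j h
          simp only [id, Fin.lt_def] at h
          rw [submatrix_apply, charmatrix_entry, Mon1_appN]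
          simp only [Fin.ext_iff, Fin.val_succ, Fin.coe_castSucc, apply_ite C,
            _root_.map_one, _root_.map_zero]
          split_ifs <;> first | ring1 | (exfalso; first | omega | assumption | tauto)
      rw [hc0, hcl, hA, hB, Ccyc_det m]
      simp only [Fin.val_zero, Fin.val_last, pow_zero, one_mul]
      have h2 : ((-1:ℤ[X])^(m+1)) * ((-1:ℤ[X])^(m+1)) = 1 := by
        rw [← pow_add]; exact Even.neg_one_pow ⟨m+1, by ring⟩
      calc X * (X^(m+1) - 1) + (-1)^(m+1) * -1 * (-1)^(m+1)
          = X * (X^(m+1) - 1) + ((-1:ℤ[X])^(m+1) * ((-1:ℤ[X])^(m+1))) * (-1) := by ring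
        _ = X^(m+1+1) - X - 1 := by
            rw [h2, mul_sub, ← pow_succ']; ring
    · intro j hj hjs
      simp only [Finset.mem_insert, Finset.mem_singleton] at hjs
      push_neg at hjs
      have h1 : (j:ℕ) ≠ 0 := by simpa [Fin.ext_iff, -Fin.val_eq_zero_iff] using hjs.1
      have h2 : (j:ℕ) ≠ m+1 := by simpa [Fin.ext_iff] using hjs.2
      have hz : charmatrix (Mon1 (m+1)) 0 j = 0 := by
        rw [charmatrix_entry, Mon1_appN]
        rw [if_neg (by simpa [Fin.ext_iff, -Fin.val_eq_zero_iff, eq_comm] using hjs.1), if_neg h2,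
          if_neg (show ¬((0:Fin (m+2)):ℕ) = (j:ℕ)+1 by simp)]
        simp
      rw [hz]
      ring
end

section
/- The intersection over t ≥ 0 of the sets M_0^t[Δ] equals the singleton {e_0}; that is, the iterates of the parabolic Mönkemeyer matrix M_0 shrink Δ to the vertex e_0. -/
open Matrix

/- ## Auxiliary lemmas -/

lemma mon0_apply (n : ℕ) (i j : Fin (n+1)) :
    Mon0 n i j = Nmat n i (Equiv.swap (0 : Fin (n + 1)) 1 (j + 1)) := by
  simp [Mon0, Matrix.mul_apply, Nmat, Fmat, Rmat, Finset.sum_ite_eq, Finset.mul_sum]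

section
variable (n : ℕ) (hn : 1 ≤ n)
include hn

lemma fin_val_one' : ((1 : Fin (n+1)) : ℕ) = 1 := by
  simp [Fin.val_one, Nat.mod_eq_of_lt (by omega : 1 < n + 1)]

lemma fzero_ne_one : (0 : Fin (n+1)) ≠ 1 := by
  simp [Fin.ext_iff]; omega

lemma flast_ne_zero : (Fin.last n) ≠ (0 : Fin (n+1)) := by
  simp [Fin.ext_iff]; omega

lemma mon0_col0 (i : Fin (n+1)) : Mon0 n i 0 = if i = 0 then 1 else 0 := by
  have h1 : (0 : Fin (n+1)) + 1 = 1 := by simp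
  rw [mon0_apply, h1, Equiv.swap_apply_right]
  simp only [Nmat, Matrix.of_apply]
  rcases eq_or_ne i 0 with h | h <;>
    simp [h, (fzero_ne_one n hn).symm, fzero_ne_one n hn]

lemma mon0_collast (i : Fin (n+1)) :
    Mon0 n i (Fin.last n) = (if i = 0 then 1 else 0) + (if i = 1 then 1 else 0) := by
  have h1 : (Fin.last n : Fin (n+1)) + 1 = 0 := by
    simp [Fin.ext_iff, Fin.add_def]
  rw [mon0_apply, h1, Equiv.swap_apply_left]
  simp only [Nmat, Matrix.of_apply]
  rcases eq_or_ne i 0 with h | h <;> rcases eq_or_ne i 1 with h' | h' <;>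
    simp_all [fzero_ne_one n hn]

lemma mon0_colmid (j : Fin (n+1)) (hj0 : j ≠ 0) (hjl : j ≠ Fin.last n) (i : Fin (n+1)) :
    Mon0 n i j = if i = j + 1 then 1 else 0 := by
  have hval : ((j + 1 : Fin (n+1)) : ℕ) = j.val + 1 := by
    rw [Fin.val_add_one]; simp [hjl]
  have hj0v : j.val ≠ 0 := fun h => hj0 (Fin.ext h)
  have h0 : j + 1 ≠ 0 := by
    rw [Ne, Fin.ext_iff, hval]; simp
  have h1 : j + 1 ≠ 1 := by
    rw [Ne, Fin.ext_iff, hval, fin_val_one' n hn]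
    omega
  rw [mon0_apply, Equiv.swap_apply_of_ne_of_ne h0 h1]
  simp only [Nmat, Matrix.of_apply]
  rcases eq_or_ne i (j+1) with h | h <;> simp_all

/-- Column 0 of every power of `Mon0` is `e₀`. -/
lemma mon0_pow_col0 (t : ℕ) (i : Fin (n+1)) :
    (Mon0 n ^ t) i 0 = if i = 0 then 1 else 0 := by
  induction t with
  | zero => simp [Matrix.one_apply]
  | succ t ih =>
    rw [pow_succ, Matrix.mul_apply]
    calc ∑ k, (Mon0 n ^ t) i k * Mon0 n k 0
        = ∑ k, (Mon0 n ^ t) i k * (if k = 0 then 1 else 0) := by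
          simp_rw [mon0_col0 n hn]
      _ = (Mon0 n ^ t) i 0 := by simp
      _ = if i = 0 then 1 else 0 := ih

/-- Structure of the columns of powers of `Mon0`: each column is
`q·e₀ + e_m`, with a lower bound on `q` when `m ≠ 0`. -/
lemma mon0_pow_col (t : ℕ) (j : Fin (n+1)) :
    ∃ q : ℕ, ∃ m : Fin (n+1),
      (∀ i, (Mon0 n ^ t) i j = (if i = 0 then (q : ℤ) else 0) + (if i = m then 1 else 0)) ∧
      (m ≠ 0 → t < q * n + m.val) := by
  induction t with
  | zero =>
    refine ⟨0, j, ?_, ?_⟩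
    · intro i; simp [Matrix.one_apply]
    · intro h
      have : 0 < j.val := Nat.pos_of_ne_zero (fun hh => h (Fin.ext hh))
      omega
  | succ t ih =>
    obtain ⟨q, m, hcol, hbound⟩ := ih
    have hentry : ∀ i, (Mon0 n ^ (t+1)) i j = (q : ℤ) * Mon0 n i 0 + Mon0 n i m := by
      intro i
      rw [pow_succ', Matrix.mul_apply]
      calc ∑ k, Mon0 n i k * (Mon0 n ^ t) k j
          = ∑ k, (Mon0 n i k * (if k = 0 then (q : ℤ) else 0)
              + Mon0 n i k * (if k = m then 1 else 0)) := by
            simp_rw [hcol, mul_add]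
        _ = (q : ℤ) * Mon0 n i 0 + Mon0 n i m := by
            rw [Finset.sum_add_distrib]
            simp [mul_ite, Finset.sum_ite_eq', mul_comm]
    by_cases hm0 : m = 0
    · refine ⟨q, 0, ?_, by simp⟩
      intro i
      rw [hentry i, hm0, mon0_col0 n hn]
      rcases eq_or_ne i 0 with h | h <;> simp [h]
    · by_cases hml : m = Fin.last n
      · refine ⟨q + 1, 1, ?_, ?_⟩
        · intro i
          rw [hentry i, hml, mon0_collast n hn, mon0_col0 n hn]
          rcases eq_or_ne i 0 with h | h <;> rcases eq_or_ne i 1 with h' | h' <;>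
            simp_all [fzero_ne_one n hn] <;> ring
        · intro _
          have hb := hbound hm0
          have hmv : m.val = n := by rw [hml]; rfl
          have h2 : (q+1) * n = q * n + n := by ring
          rw [fin_val_one' n hn]
          omega
      · refine ⟨q, m + 1, ?_, ?_⟩
        · intro i
          rw [hentry i, mon0_colmid n hn m hm0 hml, mon0_col0 n hn]
          rcases eq_or_ne i 0 with h | h <;> simp [h]
        · have hval : ((m + 1 : Fin (n+1)) : ℕ) = m.val + 1 := by
            rw [Fin.val_add_one]; simp [hml]
          intro _
          have hb := hbound hm0
          omega

/-- The key quantitative estimate. -/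
lemma mon0_estimate (k : ℕ) (p : Fin (n+1) → ℝ)
    (hp : p ∈ simg (Mon0 n ^ (n * (k+1) - 1))) :
    (∀ i, 0 ≤ p i) ∧ (∑ i, p i) = 1 ∧ (k : ℝ) * (1 - p 0) ≤ 1 := by
  obtain ⟨x, hx, rfl⟩ := hp
  set t := n * (k+1) - 1 with ht
  choose q m hcol hb using fun j => mon0_pow_col n hn t j
  set A := toR (Mon0 n ^ t) with hA
  have hAe : ∀ i j, A i j = (if i = 0 then (q j : ℝ) else 0) + (if i = m j then 1 else 0) := by
    intro i j
    rw [hA, toR, Matrix.map_apply, hcol j i]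
    push_cast
    rfl
  obtain ⟨hx0, hx1⟩ := hx
  set S : ℝ := ∑ j, (q j : ℝ) * x j with hS
  set U : ℝ := ∑ j, (if m j = 0 then 0 else x j) with hU
  have hS0 : 0 ≤ S := Finset.sum_nonneg fun j _ => mul_nonneg (by positivity) (hx0 j)
  set v := A *ᵥ x with hv
  have hvdef : ∀ i, v i = ∑ j, A i j * x j := fun i => rfl
  have hvnn : ∀ i, 0 ≤ v i := by
    intro i
    rw [hvdef]
    refine Finset.sum_nonneg fun j _ => mul_nonneg ?_ (hx0 j)
    rw [hAe]
    positivity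
  have hvsum : ∑ i, v i = S + 1 := by
    simp_rw [hvdef]
    rw [Finset.sum_comm]
    calc ∑ j, ∑ i, A i j * x j
        = ∑ j, ((q j : ℝ) + 1) * x j := by
          refine Finset.sum_congr rfl fun j _ => ?_
          rw [← Finset.sum_mul]
          congr 1
          simp [hAe, Finset.sum_add_distrib, Finset.sum_ite_eq']
      _ = S + 1 := by
          simp_rw [add_mul, one_mul]
          rw [Finset.sum_add_distrib, hx1, hS]
  have hv0 : (S + 1) - v 0 = U := by
    have hveq : v 0 = S + ∑ j, (if m j = 0 then x j else 0) := by
      rw [hvdef, hS, ← Finset.sum_add_distrib]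
      refine Finset.sum_congr rfl fun j _ => ?_
      rw [hAe]
      rcases eq_or_ne (m j) 0 with h | h <;> simp [h, eq_comm, add_mul]
    have hsplit : ∑ j, (if m j = 0 then x j else 0) + ∑ j, (if m j = 0 then 0 else x j)
        = ∑ j : Fin (n+1), x j := by
      rw [← Finset.sum_add_distrib]
      refine Finset.sum_congr rfl fun j _ => by split <;> ring
    rw [hx1] at hsplit
    rw [hveq, hU]
    linarith
  have hSU : (k : ℝ) * U ≤ S := by
    rw [hS, hU, Finset.mul_sum]
    refine Finset.sum_le_sum fun j _ => ?_
    rcases eq_or_ne (m j) 0 with h | h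
    · rw [if_pos h, mul_zero]
      exact mul_nonneg (by positivity) (hx0 j)
    · rw [if_neg h]
      have hqk : k ≤ q j := by
        have h1 := hb j h
        have hmn : (m j).val ≤ n := Nat.lt_succ_iff.mp (m j).isLt
        have h2 : t + 1 = n * (k+1) := by
          rw [ht]
          have : 0 < n * (k+1) := Nat.mul_pos (by omega) (by omega)
          omega
        nlinarith
      exact mul_le_mul_of_nonneg_right (by exact_mod_cast hqk) (hx0 j)
  have hD : (0:ℝ) < S + 1 := by linarith
  have hproj : projAct A x = (S+1)⁻¹ • v := by
    rw [projAct, hvsum]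
  rw [hproj]
  refine ⟨?_, ?_, ?_⟩
  · intro i
    simp only [Pi.smul_apply, smul_eq_mul]
    exact mul_nonneg (by positivity) (hvnn i)
  · simp only [Pi.smul_apply, smul_eq_mul]
    rw [← Finset.mul_sum, hvsum, inv_mul_cancel₀ hD.ne']
  · simp only [Pi.smul_apply, smul_eq_mul]
    have h1 : 1 - (S+1)⁻¹ * v 0 = U / (S+1) := by
      field_simp
      linarith
    rw [h1]
    have h2 : (k:ℝ) * (U / (S+1)) = (k*U) / (S+1) := by ring
    rw [h2, div_le_one hD]
    linarith

end

lemma single_mem (n : ℕ) (hn : 1 ≤ n) (t : ℕ) :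
    (Pi.single (0 : Fin (n+1)) (1:ℝ)) ∈ simg (Mon0 n ^ t) := by
  have hmv : toR (Mon0 n ^ t) *ᵥ Pi.single 0 1 = Pi.single (0 : Fin (n+1)) (1:ℝ) := by
    rw [Matrix.mulVec_single]
    funext i
    simp only [mul_one, toR, Matrix.map_apply, mon0_pow_col0 n hn t i]
    rcases eq_or_ne i 0 with h | h
    · subst h; simp [mon0_pow_col0 n hn t]
    · simp [h, Pi.single_eq_of_ne h, mon0_pow_col0 n hn t]
  refine ⟨Pi.single 0 1, ⟨fun i => ?_, ?_⟩, ?_⟩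
  · rcases eq_or_ne i 0 with h | h
    · subst h; simp
    · simp [Pi.single_eq_of_ne h]
  · simp
  · rw [projAct, hmv]
    simp

theorem stmt18 (n : ℕ) (hn : 1 ≤ n) :
    (⋂ t : ℕ, simg ((Mon0 n) ^ t)) = {Pi.single (0 : Fin (n + 1)) (1 : ℝ)} := by
  apply Set.eq_singleton_iff_unique_mem.mpr
  constructor
  · exact Set.mem_iInter.mpr (single_mem n hn)
  · intro p hp
    have hmem := Set.mem_iInter.mp hp
    have key := fun k : ℕ => mon0_estimate n hn k p (hmem _)
    have hnn : ∀ i, 0 ≤ p i := (key 0).1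
    have hsum : ∑ i, p i = 1 := (key 0).2.1
    have hbd : ∀ k : ℕ, (k:ℝ) * (1 - p 0) ≤ 1 := fun k => (key k).2.2
    have hp0 : 1 ≤ p 0 := by
      by_contra hcon
      push_neg at hcon
      obtain ⟨k, hk⟩ := exists_nat_gt ((1 - p 0)⁻¹)
      have h1 : 0 < 1 - p 0 := by linarith
      have h3 := hbd k
      have h2 : (1 - p 0)⁻¹ * (1 - p 0) = 1 := inv_mul_cancel₀ (ne_of_gt h1)
      nlinarith
    have herase : ∑ i ∈ Finset.univ.erase 0, p i = 1 - p 0 := by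
      have h := Finset.sum_erase_add Finset.univ p (Finset.mem_univ 0)
      rw [hsum] at h
      linarith
    have h0le : 0 ≤ ∑ i ∈ Finset.univ.erase 0, p i :=
      Finset.sum_nonneg fun i _ => hnn i
    have hz : ∀ i ∈ Finset.univ.erase (0 : Fin (n+1)), p i = 0 := by
      apply (Finset.sum_eq_zero_iff_of_nonneg (fun i _ => hnn i)).mp
      linarith
    funext i
    rcases eq_or_ne i 0 with h | h
    · subst h
      rw [Pi.single_eq_same]
      linarith
    · rw [Pi.single_eq_of_ne h]
      exact hz i (Finset.mem_erase.mpr ⟨h, Finset.mem_univ i⟩)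
end
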